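/- Let S ⊆ Q_{d-1} be (d-1, m/2)-edge equitable with m even, viewed inside Q_d via the embedding fixing the last coordinate to 0. Then S ∪ {t ⊕ e_1 ⊕ e_d : t ∈ S} is (d, m)-edge equitable. -/

import Mathlib

/-- Vertices of the hypercube `Q_d`. -/
abbrev Vtx (d : ℕ) := Fin d → ZMod 2

/-- The `i`-th standard basis vector of `(ZMod 2)^d`. -/
def eV {d : ℕ} (i : Fin d) : Vtx d := Pi.single i 1

/-- The number of edges of `Q_d` in direction `i` whose two endpoints both lie
in `S`, i.e. the number of pairs `{t, t ⊕ e_i} ⊆ S`. -/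
def edgeCount {d : ℕ} (S : Finset (Vtx d)) (i : Fin d) : ℕ :=
  (S.filter fun t => t i = 0 ∧ t + eV i ∈ S).card

/-- `S ⊆ Q_d` is a `(d,m)`-edge equitable design: exactly `m` edges of the
induced subgraph in each direction. -/
def Equitable {d : ℕ} (S : Finset (Vtx d)) (m : ℕ) : Prop :=
  ∀ i : Fin d, edgeCount S i = m

/-- Embedding of `Q_d` into `Q_{d+1}` fixing the last coordinate to `0`. -/
def emb {d : ℕ} (t : Vtx d) : Vtx (d + 1) := Fin.snoc t 0

lemma zmod_ne_zero_iff (a : ZMod 2) : ¬ a = 0 ↔ a = 1 := by revert a; decide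

lemma zmod_add_one_iff (a : ZMod 2) : a + 1 = 0 ↔ a = 1 := by revert a; decide

lemma eV_apply {d : ℕ} (i j : Fin d) : eV i j = if j = i then 1 else 0 := by
  simp [eV, Pi.single_apply]

lemma eV_add_self {d : ℕ} (i : Fin d) : eV i + eV i = 0 := by
  funext j
  simp only [Pi.add_apply, eV_apply, Pi.zero_apply]
  split <;> decide

lemma add_eV_add_eV {d : ℕ} (t : Vtx d) (i : Fin d) : t + eV i + eV i = t := by
  rw [add_assoc, eV_add_self, add_zero]

lemma edgeCount_flip {d : ℕ} (S : Finset (Vtx d)) (i : Fin d) :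
    (S.filter fun t => t i = 1 ∧ t + eV i ∈ S).card = edgeCount S i := by
  unfold edgeCount
  apply Finset.card_nbij' (fun t => t + eV i) (fun t => t + eV i)
  · intro a ha
    simp only [Finset.mem_coe, Finset.mem_filter] at ha ⊢
    obtain ⟨haS, h1, h2⟩ := ha
    refine ⟨h2, ?_, by rwa [add_eV_add_eV]⟩
    simp only [Pi.add_apply, h1, eV_apply, if_pos rfl]
    decide
  · intro a ha
    simp only [Finset.mem_coe, Finset.mem_filter] at ha ⊢
    obtain ⟨haS, h1, h2⟩ := ha
    refine ⟨h2, ?_, by rwa [add_eV_add_eV]⟩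
    simp only [Pi.add_apply, h1, eV_apply, if_pos rfl]
    decide
  · intro a _; exact add_eV_add_eV a i
  · intro a _; exact add_eV_add_eV a i

lemma emb_add {d : ℕ} (s t : Vtx d) : emb (s + t) = emb s + emb t := by
  funext x
  refine Fin.lastCases ?_ ?_ x <;> simp [emb]

lemma emb_inj {d : ℕ} : Function.Injective (emb (d := d)) := by
  intro a b hab
  funext i
  have := congrFun hab i.castSucc
  simpa [emb] using this

lemma emb_eV {d : ℕ} (j : Fin d) : emb (eV j) = eV (Fin.castSucc j) := by
  funext x
  refine Fin.lastCases ?_ ?_ x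
  · simp [emb, eV_apply, (Fin.castSucc_lt_last j).ne']
  · intro i
    simp [emb, eV_apply, Fin.castSucc_inj]

theorem stmt9 (d : ℕ) (hd : 1 ≤ d) (k : ℕ) (S : Finset (Vtx d))
    (h : Equitable S k) :
    Equitable
      ((S.image fun t => emb t) ∪
        (S.image fun t => emb t + eV 0 + eV (Fin.last d)))
      (2 * k) := by
  classical
  set z : Fin d := ⟨0, hd⟩ with hz
  have hL0 : (Fin.last d) ≠ (0 : Fin (d + 1)) := by
    intro hc
    have hc' : d = 0 := by simpa [Fin.ext_iff] using hc
    omega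
  have h00 : (0 : Fin (d + 1)) = Fin.castSucc z := by
    apply Fin.ext
    simp [hz]
  set g : Vtx d → Vtx (d + 1) := fun t => emb t + eV 0 + eV (Fin.last d) with hg
  set A := S.image (fun t => emb t) with hA
  set B := S.image g with hB
  -- last coordinates
  have hlastA : ∀ t : Vtx d, emb t (Fin.last d) = 0 := by
    intro t; simp [emb]
  have hlastB : ∀ t : Vtx d, g t (Fin.last d) = 1 := by
    intro t
    simp [hg, Pi.add_apply, hlastA, eV_apply, hL0]
  have ginj : Function.Injective g := by
    intro a b hab
    apply emb_inj
    have := add_right_cancel (add_right_cancel hab)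
    exact this
  have memA : ∀ u : Vtx d, emb u ∈ A ↔ u ∈ S := by
    intro u
    simp [hA, Finset.mem_image]
    constructor
    · rintro ⟨s, hs, he⟩; rwa [← emb_inj he]
    · intro hu; exact ⟨u, hu, rfl⟩
  have memB : ∀ u : Vtx d, g u ∈ B ↔ u ∈ S := by
    intro u
    simp [hB, Finset.mem_image]
    constructor
    · rintro ⟨s, hs, he⟩; rwa [← ginj he]
    · intro hu; exact ⟨u, hu, rfl⟩
  have notB : ∀ u : Vtx d, emb u ∉ B := by
    intro u hu
    rw [hB, Finset.mem_image] at hu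
    obtain ⟨s, _, he⟩ := hu
    have := congrFun he (Fin.last d)
    rw [hlastB s, hlastA u] at this
    exact one_ne_zero this
  have notA : ∀ u : Vtx d, g u ∉ A := by
    intro u hu
    rw [hA, Finset.mem_image] at hu
    obtain ⟨s, _, he⟩ := hu
    have := congrFun he (Fin.last d)
    rw [hlastB u, hlastA s] at this
    exact one_ne_zero this.symm
  have memUA : ∀ u : Vtx d, emb u ∈ A ∪ B ↔ u ∈ S := by
    intro u
    rw [Finset.mem_union]
    constructor
    · rintro (hu | hu)
      · exact (memA u).1 hu
      · exact absurd hu (notB u)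
    · intro hu; exact Or.inl ((memA u).2 hu)
  have memUB : ∀ u : Vtx d, g u ∈ A ∪ B ↔ u ∈ S := by
    intro u
    rw [Finset.mem_union]
    constructor
    · rintro (hu | hu)
      · exact absurd hu (notA u)
      · exact (memB u).1 hu
    · intro hu; exact Or.inr ((memB u).2 hu)
  have hdisj : Disjoint A B := by
    rw [Finset.disjoint_left]
    intro x hx hx'
    rw [hA, Finset.mem_image] at hx
    obtain ⟨s, _, rfl⟩ := hx
    exact notB s hx'
  -- key algebraic identities
  have hg_add : ∀ (s : Vtx d) (j : Fin d),
      g s + eV (Fin.castSucc j) = g (s + eV j) := by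
    intro s j
    rw [hg]
    simp only [emb_add, emb_eV]
    abel
  have hemb_add : ∀ (s : Vtx d) (j : Fin d),
      emb s + eV (Fin.castSucc j) = emb (s + eV j) := by
    intro s j
    rw [emb_add, emb_eV]
  have hemb_last : ∀ s : Vtx d, emb s + eV (Fin.last d) = g (s + eV z) := by
    intro s
    rw [hg]
    simp only [emb_add, emb_eV, ← h00]
    have : eV (0 : Fin (d + 1)) + eV (0 : Fin (d + 1)) = 0 := eV_add_self _
    calc emb s + eV (Fin.last d)
        = emb s + (eV (0 : Fin (d+1)) + eV (0 : Fin (d+1))) + eV (Fin.last d) := by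
          rw [this, add_zero]
      _ = emb s + eV (0 : Fin (d+1)) + eV (0 : Fin (d+1)) + eV (Fin.last d) := by abel
  intro i
  unfold edgeCount
  rw [Finset.filter_union,
    Finset.card_union_of_disjoint (Finset.disjoint_filter_filter hdisj)]
  refine Fin.lastCases ?_ ?_ i
  · -- direction last
    have hBempty : (B.filter fun t =>
        t (Fin.last d) = 0 ∧ t + eV (Fin.last d) ∈ A ∪ B) = ∅ := by
      rw [Finset.filter_eq_empty_iff]
      intro x hx
      rw [hB, Finset.mem_image] at hx
      obtain ⟨s, _, rfl⟩ := hx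
      rw [hlastB s]
      simp
    rw [hBempty, Finset.card_empty, add_zero, hA, Finset.filter_image,
      Finset.card_image_of_injective _ emb_inj]
    have hset : (S.filter fun s => emb s (Fin.last d) = 0 ∧
        emb s + eV (Fin.last d) ∈ A ∪ B) =
        S.filter fun s => s + eV z ∈ S := by
      ext s
      simp only [Finset.mem_filter]
      rw [hlastA s, hemb_last s, memUB]
      tauto
    rw [hset]
    have hsplit := Finset.card_filter_add_card_filter_not
      (s := S.filter fun s => s + eV z ∈ S) (p := fun s => s z = 0)
    rw [Finset.filter_filter, Finset.filter_filter] at hsplit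
    have h1 : (S.filter fun s => s + eV z ∈ S ∧ s z = 0).card = k := by
      have e1 : (S.filter fun s => s + eV z ∈ S ∧ s z = 0) =
          S.filter fun s => s z = 0 ∧ s + eV z ∈ S := by
        ext s; simp only [Finset.mem_filter]; tauto
      rw [e1]
      exact h z
    have h2 : (S.filter fun s => s + eV z ∈ S ∧ ¬ s z = 0).card = k := by
      have e2 : (S.filter fun s => s + eV z ∈ S ∧ ¬ s z = 0) =
          S.filter fun s => s z = 1 ∧ s + eV z ∈ S := by
        ext s
        simp only [Finset.mem_filter, zmod_ne_zero_iff]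
        tauto
      rw [e2, edgeCount_flip S z]
      exact h z
    rw [← hsplit, h1, h2, two_mul]
  · -- direction castSucc j
    intro j
    have hAcard : ((A.filter fun t => t (Fin.castSucc j) = 0 ∧
        t + eV (Fin.castSucc j) ∈ A ∪ B)).card = k := by
      rw [hA, Finset.filter_image, Finset.card_image_of_injective _ emb_inj]
      have e1 : (S.filter fun s => emb s (Fin.castSucc j) = 0 ∧
          emb s + eV (Fin.castSucc j) ∈ A ∪ B) =
          S.filter fun s => s j = 0 ∧ s + eV j ∈ S := by
        ext s
        simp only [Finset.mem_filter]
        rw [hemb_add s j, memUA]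
        have hv : emb s (Fin.castSucc j) = s j := by simp [emb]
        rw [hv]
      rw [e1]
      exact h j
    have hgval : ∀ s : Vtx d, g s (Fin.castSucc j) = s j + eV z j := by
      intro s
      rw [hg]
      simp only [Pi.add_apply, h00]
      rw [← emb_eV]
      have h1 : emb s (Fin.castSucc j) = s j := by simp [emb]
      have h2 : emb (eV z) (Fin.castSucc j) = eV z j := by simp [emb]
      have h3 : eV (Fin.last d) (Fin.castSucc j) = 0 := by
        rw [eV_apply, if_neg (Fin.castSucc_lt_last j).ne]
      rw [h1, h2, h3, add_zero]
    have hBcard : ((B.filter fun t => t (Fin.castSucc j) = 0 ∧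
        t + eV (Fin.castSucc j) ∈ A ∪ B)).card = k := by
      rw [hB, Finset.filter_image, Finset.card_image_of_injective _ ginj]
      have heq : (S.filter fun s => g s (Fin.castSucc j) = 0 ∧
          g s + eV (Fin.castSucc j) ∈ A ∪ B) =
          S.filter fun s => s j + eV z j = 0 ∧ s + eV j ∈ S := by
        ext s
        simp only [Finset.mem_filter]
        rw [hgval s, hg_add s j, memUB]
      rw [heq]
      by_cases hjz : j = z
      · have e2 : (S.filter fun s => s j + eV z j = 0 ∧ s + eV j ∈ S) =
            S.filter fun s => s j = 1 ∧ s + eV j ∈ S := by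
          ext s
          simp only [Finset.mem_filter, eV_apply, if_pos hjz, zmod_add_one_iff]
        rw [e2, edgeCount_flip S j]
        exact h j
      · have e2 : (S.filter fun s => s j + eV z j = 0 ∧ s + eV j ∈ S) =
            S.filter fun s => s j = 0 ∧ s + eV j ∈ S := by
          ext s
          simp only [Finset.mem_filter, eV_apply, if_neg hjz, add_zero]
        rw [e2]
        exact h j
    rw [hAcard, hBcard, two_mul]
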